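/- If the instance (A, k) of Distinct Vectors constructed from φ has a solution K, then φ is satisfiable. Moreover, the truth assignment α defined by letting α agree, on the variables of each bundle B_i, with the assignment corresponding to the unique column of K among B_i's columns, satisfies every clause of φ. -/

import Mathlib

/-!
The construction of the paper.  Rows and columns are 0-indexed here:
* `r ≥ 2` is a power of two, the number of variables of the CNF formula `φ`;
  variables are elements of `Fin r`; a literal is a variable plus a polarity.
* `s = 2 ^ ℓ - 1` (with `ℓ ≥ 1`) is the number of clauses; clause `q : Fin s`
  is the finite set `Clause q` of literals.
* `L = log₂ r` is the number of bundles; bundle `i` is a list `B i` of exactly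
  `r' = ⌈r / log₂ r⌉` variables (with repetitions allowed), and every variable
  occurs in exactly one bundle.
* For every bundle `i` there is a list of `ρ = 2 ^ r'` truth assignments
  `asg i p : Fin r → Bool` (`p : Fin ρ`, only the values on `B i`'s variables are
  relevant) containing every assignment of `B i`'s variables at least once.
* The matrix `A` has `n = ℓ + ρ * L` columns: the `ℓ` consistency columns
  `0, …, ℓ - 1`, followed, for each bundle `i`, by `B i`'s columns
  `ℓ + i * ρ, …, ℓ + (i + 1) * ρ - 1` (the `p`-th corresponding to assignment `p`).
* The matrix `A` has `m = 1 + L + 2 * s` rows: the all-zero row `0`, the bundle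
  indicator rows `1, …, L` (row `i + 1` is `1` exactly on bundle `i`'s columns),
  and, for each clause `q : Fin s`, the odd row `1 + L + 2 * q` (the `ℓ`-bit binary
  encoding of `q + 1` on the consistency columns and `sat_i(p, q)` on the `p`-th of
  bundle `i`'s columns) and the even row `1 + L + 2 * q + 1` (the encoding of `q + 1`
  on the consistency columns and `0` elsewhere).
* `k = ℓ + L`.  A solution is a set `K` of at most `k` columns such that the rows
  of `A` restricted to the columns in `K` are pairwise distinct.
-/

/-- A literal over variables `Fin r`: a variable together with a polarity. -/
structure DVLit (r : ℕ) where
  var : Fin r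
  pos : Bool
deriving DecidableEq

/-- All the data of the construction: the CNF formula `φ` (variables, clauses),
the bundles, and the lists of truth assignments of each bundle. -/
structure DVInstance where
  /-- number of variables -/
  r : ℕ
  hr : 2 ≤ r
  hrpow : ∃ t : ℕ, r = 2 ^ t
  ℓ : ℕ
  hℓ : 1 ≤ ℓ
  /-- number of clauses -/
  s : ℕ
  hs : s = 2 ^ ℓ - 1
  /-- the clauses of `φ` -/
  Clause : Fin s → Finset (DVLit r)
  /-- the bundles: lists of variables of length `r' = ⌈r / log₂ r⌉` -/
  B : Fin (Nat.log 2 r) → List (Fin r)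
  hBlen : ∀ i, (B i).length = (r + Nat.log 2 r - 1) / Nat.log 2 r
  /-- every variable occurs in exactly one bundle -/
  hBpart : ∀ v : Fin r, ∃! i, v ∈ B i
  /-- the list of `ρ = 2 ^ r'` truth assignments of each bundle -/
  asg : Fin (Nat.log 2 r) → Fin (2 ^ ((r + Nat.log 2 r - 1) / Nat.log 2 r)) →
    Fin r → Bool
  /-- every assignment of a bundle's variables occurs at least once in its list -/
  hasg : ∀ i, ∀ β : Fin r → Bool, ∃ p, ∀ v ∈ B i, asg i p v = β v

namespace DVInstance

variable (D : DVInstance)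

/-- `L = log₂ r`, the number of bundles. -/
def L : ℕ := Nat.log 2 D.r

/-- `r' = ⌈r / log₂ r⌉`, the size of each bundle. -/
def r' : ℕ := (D.r + D.L - 1) / D.L

/-- `ρ = 2 ^ r'`, the number of columns of each bundle. -/
def ρ : ℕ := 2 ^ D.r'

/-- the number `n = log₂(s + 1) + ρ * log₂ r` of columns of `A`. -/
def n : ℕ := D.ℓ + D.ρ * D.L

/-- the number `m = 1 + log₂ r + 2 * s` of rows of `A`. -/
def m : ℕ := 1 + D.L + 2 * D.s

/-- the budget `k = log₂(s + 1) + log₂ r`. -/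
def k : ℕ := D.ℓ + D.L

/-- `sat_i(p, q)`: whether the `p`-th assignment of bundle `i` makes clause `q` true,
i.e. whether some literal of clause `q` whose variable belongs to bundle `i` is set
to its polarity by the `p`-th assignment of bundle `i` (nat-indexed version;
`false` outside the index ranges). -/
def satN (i p q : ℕ) : Bool :=
  if h : i < D.L ∧ p < D.ρ ∧ q < D.s then
    decide (∃ lit ∈ D.Clause ⟨q, h.2.2⟩, lit.var ∈ D.B ⟨i, h.1⟩ ∧
      D.asg ⟨i, h.1⟩ ⟨p, h.2.1⟩ lit.var = lit.pos)
  else false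

/-- The constructed binary matrix `A` (rows and columns 0-indexed;
entries outside the `m × n` range are irrelevant). -/
def A (row col : ℕ) : Bool :=
  if row = 0 then
    -- the all-zero row
    false
  else if row ≤ D.L then
    -- bundle indicator rows: row `i + 1` is `1` exactly on bundle `i`'s columns
    decide (D.ℓ + (row - 1) * D.ρ ≤ col ∧ col < D.ℓ + row * D.ρ)
  else if col < D.ℓ then
    -- clause rows on the consistency columns: the binary encoding of the
    -- (1-indexed) clause number
    Nat.testBit ((row - D.L - 1) / 2 + 1) col
  else if (row - D.L - 1) % 2 = 0 then
    -- odd row of clause `q = (row - L - 1) / 2`: `sat_i(p, q)` on the `p`-th of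
    -- bundle `i`'s columns
    D.satN ((col - D.ℓ) / D.ρ) ((col - D.ℓ) % D.ρ) ((row - D.L - 1) / 2)
  else
    -- even row of clause `q`: zero outside the consistency columns
    false

/-- `K` is a solution for the instance `(A, k)`: a set of at most `k` columns of `A`
such that the rows of `A` restricted to the columns in `K` are pairwise distinct. -/
def Solution (K : Finset ℕ) : Prop :=
  (∀ c ∈ K, c < D.n) ∧ K.card ≤ D.k ∧
    ∀ i j, i < D.m → j < D.m → i ≠ j → ∃ c ∈ K, D.A i c ≠ D.A j c

end DVInstance

namespace DVInstance

variable (D : DVInstance)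

lemma A_zero' (c : ℕ) : D.A 0 c = false := by simp [A]

lemma A_bundle' (i c : ℕ) (hi : i < D.L) :
    D.A (i + 1) c = decide (D.ℓ + i * D.ρ ≤ c ∧ c < D.ℓ + (i + 1) * D.ρ) := by
  have h1 : ¬ (i + 1 = 0) := by omega
  have h2 : i + 1 ≤ D.L := hi
  simp [A, h1, h2]

lemma A_odd_lo (q c : ℕ) (hc : c < D.ℓ) :
    D.A (1 + D.L + 2 * q) c = Nat.testBit (q + 1) c := by
  have h1 : ¬ (1 + D.L + 2 * q = 0) := by omega
  have h2 : ¬ (1 + D.L + 2 * q ≤ D.L) := by omega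
  have h3 : (1 + D.L + 2 * q - D.L - 1) / 2 = q := by omega
  simp [A, h1, h2, hc, h3]

lemma A_even_lo (q c : ℕ) (hc : c < D.ℓ) :
    D.A (1 + D.L + 2 * q + 1) c = Nat.testBit (q + 1) c := by
  have h1 : ¬ (1 + D.L + 2 * q + 1 = 0) := by omega
  have h2 : ¬ (1 + D.L + 2 * q + 1 ≤ D.L) := by omega
  have h3 : (1 + D.L + 2 * q + 1 - D.L - 1) / 2 = q := by omega
  simp [A, h1, h2, hc, h3]

lemma A_odd_hi (q c : ℕ) (hc : D.ℓ ≤ c) :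
    D.A (1 + D.L + 2 * q) c
      = D.satN ((c - D.ℓ) / D.ρ) ((c - D.ℓ) % D.ρ) q := by
  have h1 : ¬ (1 + D.L + 2 * q = 0) := by omega
  have h2 : ¬ (1 + D.L + 2 * q ≤ D.L) := by omega
  have h3 : ¬ (c < D.ℓ) := by omega
  have h4 : (1 + D.L + 2 * q - D.L - 1) % 2 = 0 := by omega
  have h5 : (1 + D.L + 2 * q - D.L - 1) / 2 = q := by omega
  simp [A, h1, h2, h3, h4, h5]

lemma A_even_hi (q c : ℕ) (hc : D.ℓ ≤ c) :
    D.A (1 + D.L + 2 * q + 1) c = false := by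
  have h1 : ¬ (1 + D.L + 2 * q + 1 = 0) := by omega
  have h2 : ¬ (1 + D.L + 2 * q + 1 ≤ D.L) := by omega
  have h3 : ¬ (c < D.ℓ) := by omega
  have h4 : ¬ ((1 + D.L + 2 * q + 1 - D.L - 1) % 2 = 0) := by omega
  simp [A, h1, h2, h3, h4]

end DVInstance

/-- If the constructed instance `(A, k)` has a solution `K`, then `φ`
is satisfiable; moreover, every truth assignment `α` that agrees, on the variables of
each bundle `B i`, with the assignment corresponding to a column of `K` among `B i`'s
columns, satisfies every clause of `φ`. -/
theorem solution_implies_satisfiable (D : DVInstance) (K : Finset ℕ)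
    (hK : D.Solution K) :
    (∃ α : Fin D.r → Bool, ∀ q : Fin D.s, ∃ lit ∈ D.Clause q, α lit.var = lit.pos) ∧
    (∀ α : Fin D.r → Bool,
      (∀ (i : Fin D.L) (p : Fin D.ρ), D.ℓ + i.val * D.ρ + p.val ∈ K →
        ∀ v ∈ D.B i, α v = D.asg i p v) →
      ∀ q : Fin D.s, ∃ lit ∈ D.Clause q, α lit.var = lit.pos) := by
  obtain ⟨hKn, hKcard, hKdist⟩ := hK
  have hρ : 0 < D.ρ := Nat.pow_pos (by norm_num)
  have hs := D.hs
  have hℓ := D.hℓ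
  have hs1 : 1 ≤ D.s := by
    have h2 : 2 ^ 1 ≤ 2 ^ D.ℓ := Nat.pow_le_pow_right (by norm_num) hℓ
    omega
  -- Part 2 first
  have main : ∀ α : Fin D.r → Bool,
      (∀ (i : Fin D.L) (p : Fin D.ρ), D.ℓ + i.val * D.ρ + p.val ∈ K →
        ∀ v ∈ D.B i, α v = D.asg i p v) →
      ∀ q : Fin D.s, ∃ lit ∈ D.Clause q, α lit.var = lit.pos := by
    intro α hα q
    have hq := q.isLt
    obtain ⟨c, hcK, hcne⟩ := hKdist (1 + D.L + 2 * q.val) (1 + D.L + 2 * q.val + 1)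
      (by unfold DVInstance.m; omega) (by unfold DVInstance.m; omega) (by omega)
    by_cases hc : c < D.ℓ
    · rw [D.A_odd_lo q.val c hc, D.A_even_lo q.val c hc] at hcne
      exact absurd rfl hcne
    · push_neg at hc
      rw [D.A_odd_hi q.val c hc, D.A_even_hi q.val c hc] at hcne
      have hsat : D.satN ((c - D.ℓ) / D.ρ) ((c - D.ℓ) % D.ρ) q.val = true := by
        cases h : D.satN ((c - D.ℓ) / D.ρ) ((c - D.ℓ) % D.ρ) q.val
        · rw [h] at hcne; exact absurd rfl hcne
        · rfl
      rw [DVInstance.satN] at hsat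
      split at hsat
      case neg.isFalse => simp at hsat
      case neg.isTrue h =>
        obtain ⟨hiL, hpρ, hqs⟩ := h
        rw [decide_eq_true_eq] at hsat
        obtain ⟨lit, hlit, hvar, hasg⟩ := hsat
        have hqeq : (⟨q.val, hqs⟩ : Fin D.s) = q := rfl
        rw [hqeq] at hlit
        refine ⟨lit, hlit, ?_⟩
        have hmod := Nat.div_add_mod (c - D.ℓ) D.ρ
        have hcol : D.ℓ + ((c - D.ℓ) / D.ρ) * D.ρ + (c - D.ℓ) % D.ρ = c := by
          rw [mul_comm]; omega
        have hmem : D.ℓ + ((c - D.ℓ) / D.ρ) * D.ρ + (c - D.ℓ) % D.ρ ∈ K := by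
          rw [hcol]; exact hcK
        rw [hα ⟨(c - D.ℓ) / D.ρ, hiL⟩ ⟨(c - D.ℓ) % D.ρ, hpρ⟩ hmem lit.var hvar]
        exact hasg
  -- consistency columns belong to K
  have hcons : ∀ c, c < D.ℓ → c ∈ K := by
    intro c hcℓ
    have hpc : 0 < 2 ^ c := Nat.pow_pos (by norm_num)
    have hq : 2 ^ c - 1 < D.s := by
      have h1 : 2 ^ c < 2 ^ D.ℓ := Nat.pow_lt_pow_right (by norm_num) hcℓ
      omega
    obtain ⟨c', hc'K, hne⟩ := hKdist 0 (1 + D.L + 2 * (2 ^ c - 1) + 1)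
      (by unfold DVInstance.m; omega) (by unfold DVInstance.m; omega) (by omega)
    rw [D.A_zero'] at hne
    by_cases hc' : c' < D.ℓ
    · rw [D.A_even_lo _ c' hc'] at hne
      have h21 : 2 ^ c - 1 + 1 = 2 ^ c := by omega
      rw [h21] at hne
      have htb : Nat.testBit (2 ^ c) c' = true := by
        cases h : Nat.testBit (2 ^ c) c'
        · rw [h] at hne; exact absurd rfl hne
        · rfl
      have hcc : c = c' := by
        by_contra h
        rw [Nat.testBit_two_pow_of_ne h] at htb
        exact absurd htb (by simp)
      rw [hcc]; exact hc'K
    · rw [D.A_even_hi _ c' (by omega)] at hne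
      exact absurd rfl hne
  -- the bundle column sets
  set Ki : ℕ → Finset ℕ :=
    fun i => K.filter (fun c => D.ℓ + i * D.ρ ≤ c ∧ c < D.ℓ + (i + 1) * D.ρ)
    with hKidef
  have hKine : ∀ i, i < D.L → (Ki i).Nonempty := by
    intro i hi
    obtain ⟨c, hcK, hne⟩ := hKdist 0 (i + 1)
      (by unfold DVInstance.m; omega) (by unfold DVInstance.m; omega) (by omega)
    rw [D.A_zero', D.A_bundle' i c hi] at hne
    have hP : D.ℓ + i * D.ρ ≤ c ∧ c < D.ℓ + (i + 1) * D.ρ :=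
      of_decide_eq_true (Bool.ne_false_iff.mp hne.symm)
    exact ⟨c, Finset.mem_filter.mpr ⟨hcK, hP⟩⟩
  have hdisj : ∀ i j, i ≠ j → Disjoint (Ki i) (Ki j) := by
    have key : ∀ i j, i < j → Disjoint (Ki i) (Ki j) := by
      intro i j hij
      apply Finset.disjoint_left.mpr
      intro c hci hcj
      rw [hKidef] at hci hcj
      simp only [Finset.mem_filter] at hci hcj
      have hmul : (i + 1) * D.ρ ≤ j * D.ρ := Nat.mul_le_mul_right _ (by omega)
      omega
    intro i j hij
    rcases Nat.lt_or_ge i j with h | h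
    · exact key i j h
    · exact (key j i (by omega)).symm
  have hdisj2 : Disjoint (Finset.range D.ℓ) ((Finset.range D.L).biUnion Ki) := by
    apply Finset.disjoint_left.mpr
    intro c hc hc2
    obtain ⟨i, _, hci⟩ := Finset.mem_biUnion.mp hc2
    rw [hKidef] at hci
    simp only [Finset.mem_filter] at hci
    have := Finset.mem_range.mp hc
    omega
  have hsub : Finset.range D.ℓ ∪ (Finset.range D.L).biUnion Ki ⊆ K := by
    intro c hc
    rcases Finset.mem_union.mp hc with h | h
    · exact hcons c (Finset.mem_range.mp h)
    · obtain ⟨i, _, hci⟩ := Finset.mem_biUnion.mp h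
      rw [hKidef] at hci
      exact (Finset.mem_filter.mp hci).1
  have hcard : D.ℓ + ∑ i ∈ Finset.range D.L, (Ki i).card ≤ D.ℓ + D.L := by
    calc D.ℓ + ∑ i ∈ Finset.range D.L, (Ki i).card
        = (Finset.range D.ℓ ∪ (Finset.range D.L).biUnion Ki).card := by
          rw [Finset.card_union_of_disjoint hdisj2, Finset.card_range,
            Finset.card_biUnion (fun i _ j _ hij => hdisj i j hij)]
      _ ≤ K.card := Finset.card_le_card hsub
      _ ≤ D.k := hKcard
      _ = D.ℓ + D.L := rfl
  have hsum : ∑ i ∈ Finset.range D.L, (Ki i).card ≤ D.L := by omega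
  -- each bundle contributes exactly one column
  have huniq : ∀ i, i < D.L → ∀ c₁ ∈ Ki i, ∀ c₂ ∈ Ki i, c₁ = c₂ := by
    intro i hi
    have hone : (Ki i).card ≤ 1 := by
      have hmem : i ∈ Finset.range D.L := Finset.mem_range.mpr hi
      have h := Finset.add_sum_erase (Finset.range D.L) (fun j => (Ki j).card) hmem
      have herase : ((Finset.range D.L).erase i).card • 1
          ≤ ∑ j ∈ (Finset.range D.L).erase i, (Ki j).card :=
        Finset.card_nsmul_le_sum _ _ _ (fun j hj =>
          (hKine j (Finset.mem_range.mp (Finset.mem_of_mem_erase hj))).card_pos)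
      rw [Finset.card_erase_of_mem hmem, Finset.card_range, smul_eq_mul, mul_one]
        at herase
      omega
    exact fun c₁ h1 c₂ h2 => Finset.card_le_one.mp hone c₁ h1 c₂ h2
  -- choose the unique column of each bundle
  have hex : ∀ i : Fin D.L, ∃ p : Fin D.ρ, D.ℓ + i.val * D.ρ + p.val ∈ K := by
    intro i
    obtain ⟨c, hc⟩ := hKine i.val i.isLt
    rw [hKidef] at hc
    obtain ⟨hcK, hlo, hhi⟩ := Finset.mem_filter.mp hc
    have hmul : (i.val + 1) * D.ρ = i.val * D.ρ + D.ρ := by ring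
    refine ⟨⟨c - D.ℓ - i.val * D.ρ, by omega⟩, ?_⟩
    have hcol : D.ℓ + i.val * D.ρ + (c - D.ℓ - i.val * D.ρ) = c := by omega
    rw [hcol]; exact hcK
  choose pfun hpfun using hex
  have hvex : ∀ v : Fin D.r, ∃ i : Fin D.L, v ∈ D.B i := fun v => (D.hBpart v).exists
  choose ifun hifun using hvex
  -- the key fact: every column of K in bundle i's range is the chosen one
  have hpu : ∀ (i : Fin D.L) (p : Fin D.ρ),
      D.ℓ + i.val * D.ρ + p.val ∈ K → p = pfun i := by
    intro i p hp
    have hmul : (i.val + 1) * D.ρ = i.val * D.ρ + D.ρ := by ring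
    have hm1 : D.ℓ + i.val * D.ρ + p.val ∈ Ki i.val := by
      rw [hKidef]
      exact Finset.mem_filter.mpr ⟨hp, by omega, by have := p.isLt; omega⟩
    have hm2 : D.ℓ + i.val * D.ρ + (pfun i).val ∈ Ki i.val := by
      rw [hKidef]
      exact Finset.mem_filter.mpr ⟨hpfun i, by omega, by have := (pfun i).isLt; omega⟩
    have := huniq i.val i.isLt _ hm1 _ hm2
    exact Fin.ext (by omega)
  have hαhyp : ∀ (i : Fin D.L) (p : Fin D.ρ), D.ℓ + i.val * D.ρ + p.val ∈ K →
      ∀ v ∈ D.B i, (fun v => D.asg (ifun v) (pfun (ifun v)) v) v = D.asg i p v := by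
    intro i p hip v hv
    have hieq : ifun v = i := (D.hBpart v).unique (hifun v) hv
    have hpeq : p = pfun i := hpu i p hip
    simp only [hieq, hpeq]
  exact ⟨⟨_, main _ hαhyp⟩, main⟩
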